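/- If for all s ∈ [0,t] and all ξ the derivative x_s'(ξ) = 1 + f''(h(ξ))·h'(ξ)·s is positive, then the formula u(x_t(ξ), t) = h(ξ) gives a well-defined C¹ classical solution of u_t + f(u)_x = 0 on ℝ × (0,t) with u(·,0) = h, where x_t(ξ) = ξ + f'(h(ξ))·t. -/

import Mathlib

/-- If `1 + f''(h(ξ))·h'(ξ)·s > 0` for all `ξ` and `s ∈ [0,T]`, then the formula
`u(ξ + f'(h(ξ))·s, s) = h(ξ)` defines a `C¹` classical solution of `u_t + f(u)_x = 0`
on `ℝ × (0,T)` with initial datum `h`. -/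
theorem stmt7 (f h : ℝ → ℝ) (hf : ContDiff ℝ 2 f) (hh : ContDiff ℝ 1 h)
    (hsupp : HasCompactSupport h) (T : ℝ) (hT : 0 < T)
    (hpos : ∀ ξ : ℝ, ∀ s ∈ Set.Icc (0:ℝ) T,
      0 < 1 + deriv (deriv f) (h ξ) * deriv h ξ * s) :
    ∃ u : ℝ × ℝ → ℝ,
      (∀ ξ : ℝ, ∀ s ∈ Set.Icc (0:ℝ) T, u (ξ + deriv f (h ξ) * s, s) = h ξ) ∧
      (∀ x : ℝ, u (x, 0) = h x) ∧
      ContDiffOn ℝ 1 u (Set.univ ×ˢ Set.Ioo (0:ℝ) T) ∧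
      (∀ x : ℝ, ∀ s ∈ Set.Ioo (0:ℝ) T,
        deriv (fun τ => u (x, τ)) s + deriv (fun y => f (u (y, s))) x = 0) := by
  classical
  open Set Function Filter ContinuousLinearMap in
  -- Basic differentiability facts
  have hf1 : ContDiff ℝ 1 (deriv f) := by
    have h2 : ContDiff ℝ (1+1) f := by norm_num; exact hf
    exact (contDiff_succ_iff_deriv.mp h2).2.2
  have hfd : Differentiable ℝ f := hf.differentiable (by norm_num)
  have hhd : Differentiable ℝ h := hh.differentiable one_ne_zero
  have hf'd : Differentiable ℝ (deriv f) := hf1.differentiable one_ne_zero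
  set a : ℝ → ℝ := fun ξ => deriv f (h ξ) with ha_def
  have haC : ContDiff ℝ 1 a := hf1.comp hh
  have had : ∀ ξ, HasDerivAt a (deriv (deriv f) (h ξ) * deriv h ξ) ξ := fun ξ =>
    ((hf'd (h ξ)).hasDerivAt).comp ξ (hhd ξ).hasDerivAt
  have hFd : ∀ (s ξ : ℝ), HasDerivAt (fun ξ => ξ + a ξ * s)
      (1 + deriv (deriv f) (h ξ) * deriv h ξ * s) ξ := fun s ξ => by
    exact (hasDerivAt_id' ξ).add ((had ξ).mul_const s)
  -- Strict monotonicity and injectivity of the characteristic map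
  have hmono : ∀ s ∈ Icc (0:ℝ) T, StrictMono (fun ξ => ξ + a ξ * s) := fun s hs =>
    strictMono_of_deriv_pos fun ξ => by rw [(hFd s ξ).deriv]; exact hpos ξ s hs
  have hinj : ∀ s ∈ Icc (0:ℝ) T, Function.Injective (fun ξ => ξ + a ξ * s) := fun s hs =>
    (hmono s hs).injective
  -- Boundedness of a
  have hk : HasCompactSupport (fun ξ => a ξ - deriv f 0) := by
    apply hsupp.mono'
    refine subset_trans ?_ (subset_tsupport h)
    intro ξ hξ
    simp only [Function.mem_support, ne_eq] at hξ ⊢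
    intro hh0
    apply hξ
    simp [ha_def, hh0]
  obtain ⟨C0, hC0⟩ := (haC.continuous.sub continuous_const).bounded_above_of_compact_support hk
  have hC : ∀ ξ, |a ξ| ≤ C0 + |deriv f 0| := by
    intro ξ
    have := hC0 ξ
    simp only [Real.norm_eq_abs, Pi.sub_apply] at this
    calc |a ξ| = |(a ξ - deriv f 0) + deriv f 0| := by ring_nf
    _ ≤ |a ξ - deriv f 0| + |deriv f 0| := abs_add_le _ _
    _ ≤ C0 + |deriv f 0| := by linarith
  -- Surjectivity
  have hsurj : ∀ s ∈ Icc (0:ℝ) T, Function.Surjective (fun ξ => ξ + a ξ * s) := by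
    intro s hs
    set C := C0 + |deriv f 0| with hCdef
    have hCnn : 0 ≤ C := le_trans (abs_nonneg _) (hC 0)
    have hb : ∀ ξ, |a ξ * s| ≤ C * T := by
      intro ξ
      rw [abs_mul]
      exact mul_le_mul (hC ξ) (by rw [abs_of_nonneg hs.1]; exact hs.2) (abs_nonneg _) hCnn
    have hcont : Continuous fun ξ => ξ + a ξ * s :=
      continuous_id.add (haC.continuous.mul continuous_const)
    apply hcont.surjective
    · exact tendsto_atTop_mono (fun ξ => by have := (abs_le.mp (hb ξ)).1; dsimp; linarith)
        (tendsto_atTop_add_const_right _ (-(C * T)) tendsto_id)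
    · exact tendsto_atBot_mono (fun ξ => by have := (abs_le.mp (hb ξ)).2; dsimp; linarith)
        (tendsto_atBot_add_const_right _ (C * T) tendsto_id)
  -- The inverse characteristic map and the solution
  set G : ℝ → ℝ → ℝ := fun s x => Function.invFun (fun ξ => ξ + a ξ * s) x with hGdef
  have hGr : ∀ s ∈ Icc (0:ℝ) T, ∀ x, G s x + a (G s x) * s = x := fun s hs x =>
    Function.invFun_eq (hsurj s hs x)
  have hGl : ∀ s ∈ Icc (0:ℝ) T, ∀ ξ, G s (ξ + a ξ * s) = ξ := fun s hs ξ =>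
    Function.leftInverse_invFun (hinj s hs) ξ
  set σf : ℝ → ℝ := fun s => max 0 (min s T) with hσdef
  have hσIcc : ∀ s, σf s ∈ Icc (0:ℝ) T := fun s =>
    ⟨le_max_left _ _, max_le (le_of_lt hT) (min_le_right _ _)⟩
  have hσeq : ∀ s ∈ Icc (0:ℝ) T, σf s = s := fun s hs => by
    simp [hσdef, min_eq_left hs.2, max_eq_right hs.1]
  set u : ℝ × ℝ → ℝ := fun p => h (G (σf p.2) p.1) with hudef
  -- Main local analysis via the inverse function theorem
  have main : ∀ x s, s ∈ Set.Ioo (0:ℝ) T →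
      ContDiffAt ℝ 1 u (x, s) ∧
      HasDerivAt (fun τ => u (x, τ))
        (deriv h (G s x) * (-(a (G s x)) /
          (1 + deriv (deriv f) (h (G s x)) * deriv h (G s x) * s))) s ∧
      HasDerivAt (fun y => u (y, s))
        (deriv h (G s x) *
          (1 + deriv (deriv f) (h (G s x)) * deriv h (G s x) * s)⁻¹) x := by
    intro x s hs
    have hsI : s ∈ Icc (0:ℝ) T := ⟨le_of_lt hs.1, le_of_lt hs.2⟩
    set ξ := G s x with hξdef
    have hx : ξ + a ξ * s = x := hGr s hsI x
    set D := 1 + deriv (deriv f) (h ξ) * deriv h ξ * s with hDdef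
    have hD : 0 < D := hpos ξ s hsI
    have hDne : D ≠ 0 := ne_of_gt hD
    set Φ : ℝ × ℝ → ℝ × ℝ := fun p => (p.1 + a p.1 * p.2, p.2) with hΦdef
    have hΦc : ContDiff ℝ 1 Φ :=
      (contDiff_fst.add ((haC.comp contDiff_fst).mul contDiff_snd)).prodMk contDiff_snd
    set L1 : ℝ × ℝ →L[ℝ] ℝ := D • fst ℝ ℝ ℝ + a ξ • snd ℝ ℝ ℝ with hL1
    set M1 : ℝ × ℝ →L[ℝ] ℝ := D⁻¹ • fst ℝ ℝ ℝ - (a ξ / D) • snd ℝ ℝ ℝ with hM1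
    set L : (ℝ × ℝ) ≃L[ℝ] ℝ × ℝ := ContinuousLinearEquiv.equivOfInverse
      (L1.prod (snd ℝ ℝ ℝ)) (M1.prod (snd ℝ ℝ ℝ))
      (fun p => by
        simp [hL1, hM1, Prod.ext_iff]
        field_simp
        try ring)
      (fun p => by
        simp [hL1, hM1, Prod.ext_iff]
        field_simp
        try ring) with hL
    have hΦd : HasFDerivAt Φ (L : ℝ × ℝ →L[ℝ] ℝ × ℝ) (ξ, s) := by
      have h1 : HasFDerivAt (fun p : ℝ × ℝ => a p.1)
          ((deriv (deriv f) (h ξ) * deriv h ξ) • fst ℝ ℝ ℝ) (ξ, s) := by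
        have := (had ξ).hasFDerivAt.comp (f := Prod.fst) (ξ, s) (hasFDerivAt_fst (p := ((ξ, s) : ℝ × ℝ)))
        refine this.congr_fderiv ?_
        ext p <;> simp [mul_comm]
      have h2 : HasFDerivAt (fun p : ℝ × ℝ => p.1 + a p.1 * p.2) L1 (ξ, s) := by
        have := (hasFDerivAt_fst (p := ((ξ, s) : ℝ × ℝ))).add
          (h1.mul (hasFDerivAt_snd (p := ((ξ, s) : ℝ × ℝ))))
        refine this.congr_fderiv ?_
        ext p <;> simp [hL1, hDdef] <;> ring
      have := h2.prodMk (hasFDerivAt_snd (p := ((ξ, s) : ℝ × ℝ)))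
      refine this.congr_fderiv ?_
      rfl
    have hΦs : HasStrictFDerivAt Φ (L : ℝ × ℝ →L[ℝ] ℝ × ℝ) (ξ, s) :=
      hΦc.contDiffAt.hasStrictFDerivAt' hΦd one_ne_zero
    set ψ : ℝ × ℝ → ℝ × ℝ := hΦs.localInverse Φ L (ξ, s) with hψdef
    have hΦxs : Φ (ξ, s) = (x, s) := by
      rw [hΦdef]; simp only []; rw [Prod.mk.injEq]; exact ⟨hx, rfl⟩
    have hψcd : ContDiffAt ℝ 1 ψ (x, s) := by
      have := hΦc.contDiffAt.to_localInverse hΦd one_ne_zero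
      rw [hΦxs] at this
      exact this
    have hψs : HasStrictFDerivAt ψ (L.symm : ℝ × ℝ →L[ℝ] ℝ × ℝ) (x, s) := by
      have := hΦs.to_localInverse
      rw [hΦxs] at this
      exact this
    have hψx : ψ (x, s) = (ξ, s) := by
      have := hΦs.localInverse_apply_image
      rw [hΦxs] at this
      exact this
    have hev : u =ᶠ[nhds (x, s)] fun q => h ((ψ q).1) := by
      have h2 : ∀ᶠ q : ℝ × ℝ in nhds (x, s), q.2 ∈ Set.Ioo (0:ℝ) T := by
        have : IsOpen {q : ℝ × ℝ | q.2 ∈ Set.Ioo (0:ℝ) T} := isOpen_Ioo.preimage continuous_snd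
        exact this.mem_nhds (by exact hs)
      have hri : ∀ᶠ q in nhds (x, s), Φ (ψ q) = q := by
        have := hΦs.eventually_right_inverse
        rw [hΦxs] at this
        exact this
      filter_upwards [h2, hri] with q hq2 hq1
      have hq2' : q.2 ∈ Icc (0:ℝ) T := ⟨le_of_lt hq2.1, le_of_lt hq2.2⟩
      have e1 : (ψ q).2 = q.2 := by
        have h3 := congrArg Prod.snd hq1
        simpa [hΦdef] using h3
      have e2 : (ψ q).1 + a ((ψ q).1) * q.2 = q.1 := by
        have h3 := congrArg Prod.fst hq1
        simp only [hΦdef] at h3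
        rw [e1] at h3
        exact h3
      show h (G (σf q.2) q.1) = h ((ψ q).1)
      rw [hσeq q.2 hq2', ← e2, hGl q.2 hq2']
    have hψ1 : (ψ (x, s)).1 = ξ := by rw [hψx]
    have hinner : HasFDerivAt (fun q => (ψ q).1)
        ((fst ℝ ℝ ℝ).comp (L.symm : ℝ × ℝ →L[ℝ] ℝ × ℝ)) (x, s) :=
      (hasFDerivAt_fst (p := ψ (x, s))).comp (x, s) hψs.hasFDerivAt
    have houter : HasFDerivAt (fun q => h ((ψ q).1))
        ((deriv h ξ) • ((fst ℝ ℝ ℝ).comp (L.symm : ℝ × ℝ →L[ℝ] ℝ × ℝ))) (x, s) := by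
      refine HasDerivAt.comp_hasFDerivAt (x, s) ?_ hinner
      rw [hψ1]
      exact (hhd ξ).hasDerivAt
    have hu : HasFDerivAt u
        ((deriv h ξ) • ((fst ℝ ℝ ℝ).comp (L.symm : ℝ × ℝ →L[ℝ] ℝ × ℝ))) (x, s) :=
      houter.congr_of_eventuallyEq hev
    refine ⟨((hh.contDiffAt).comp _ ((contDiffAt_fst).comp _ hψcd)).congr_of_eventuallyEq hev,
      ?_, ?_⟩
    · have hcurve : HasDerivAt (fun τ : ℝ => ((x, τ) : ℝ × ℝ)) (((0:ℝ), (1:ℝ)) : ℝ × ℝ) s :=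
        (hasDerivAt_const s x).prodMk (hasDerivAt_id s)
      have ht := hu.comp_hasDerivAt s hcurve
      have hval : ((deriv h ξ) • ((fst ℝ ℝ ℝ).comp (L.symm : ℝ × ℝ →L[ℝ] ℝ × ℝ)))
          ((0:ℝ), (1:ℝ)) = deriv h ξ * (-(a ξ) / D) := by
        rw [hL]
        simp [hM1]
        ring
      rw [hval] at ht
      exact ht
    · have hcurve : HasDerivAt (fun y : ℝ => ((y, s) : ℝ × ℝ)) (((1:ℝ), (0:ℝ)) : ℝ × ℝ) x :=
        (hasDerivAt_id x).prodMk (hasDerivAt_const x s)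
      have ht := hu.comp_hasDerivAt x hcurve
      have hval : ((deriv h ξ) • ((fst ℝ ℝ ℝ).comp (L.symm : ℝ × ℝ →L[ℝ] ℝ × ℝ)))
          ((1:ℝ), (0:ℝ)) = deriv h ξ * D⁻¹ := by
        rw [hL]
        simp [hM1]
      rw [hval] at ht
      exact ht
  refine ⟨u, ?_, ?_, ?_, ?_⟩
  · intro ξ s hs
    show h (G (σf s) (ξ + a ξ * s)) = h ξ
    rw [hσeq s hs, hGl s hs ξ]
  · intro x
    show h (G (σf 0) x) = h x
    have h0 : σf 0 = 0 := hσeq 0 ⟨le_rfl, le_of_lt hT⟩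
    rw [h0]
    have : G 0 x = x := by
      have := hGl 0 ⟨le_rfl, le_of_lt hT⟩ x
      simpa using this
    rw [this]
  · intro p hp
    have := (main p.1 p.2 hp.2).1
    simpa using this.contDiffWithinAt
  · intro x s hs
    obtain ⟨-, ht, hx'⟩ := main x s hs
    have hsI : s ∈ Icc (0:ℝ) T := ⟨le_of_lt hs.1, le_of_lt hs.2⟩
    have hD : 0 < 1 + deriv (deriv f) (h (G s x)) * deriv h (G s x) * s := hpos (G s x) s hsI
    have hu0 : u (x, s) = h (G s x) := by
      show h (G (σf s) x) = h (G s x)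
      rw [hσeq s hsI]
    have hfu : HasDerivAt (fun y => f (u (y, s)))
        (deriv f (h (G s x)) * (deriv h (G s x) *
          (1 + deriv (deriv f) (h (G s x)) * deriv h (G s x) * s)⁻¹)) x := by
      have hfh : HasDerivAt f (deriv f (h (G s x))) (u (x, s)) := by
        rw [hu0]
        exact (hfd (h (G s x))).hasDerivAt
      exact hfh.comp x hx'
    rw [ht.deriv, hfu.deriv]
    have haξ : a (G s x) = deriv f (h (G s x)) := rfl
    rw [haξ]
    field_simp
    ring
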